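/- arXiv:1109.2550 — 2 statements merged into one kernel-verified Lean document; each statement's English description precedes it below -/
import Mathlib

section
/- Let Ω be a bounded open set in ℝⁿ with diameter d, and let 1 < p < ∞, θ > 0, α ≥ 0, 0 ≤ λ < 1. There exists a constant C, depending only on n, p, λ, θ, α and d (but not on f, s or σ), such that for all 0 < σ < s < min{p−1, λ/α} and every measurable function f : Ω → ℝ, one has Φ^{p,λ}_{θ,α}(f, s) ≤ C · s^{θ/(p−s)} · σ^{−θ/(p−σ)} · Φ^{p,λ}_{θ,α}(f, σ). -/
open MeasureTheory Metric Set ENNReal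

/-- Morrey "norm" of an `ℝ≥0∞`-valued function on `Ω`:
`sup_{x ∈ Ω, 0 < r ≤ diam Ω} ( |B(x,r)|^{-μ} ∫_{B(x,r) ∩ Ω} f^q )^{1/q}`. -/
noncomputable def morreyNormE {n : ℕ} (Ω : Set (EuclideanSpace ℝ (Fin n)))
    (q μ : ℝ) (f : EuclideanSpace ℝ (Fin n) → ℝ≥0∞) : ℝ≥0∞ :=
  ⨆ x ∈ Ω, ⨆ r ∈ Set.Ioc (0 : ℝ) (Metric.diam Ω),
    ((volume (Metric.ball x r)) ^ (-μ) *
      ∫⁻ y in Metric.ball x r ∩ Ω, f y ^ q) ^ (1 / q)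

/-- Morrey norm of a real-valued function. -/
noncomputable def morreyNorm {n : ℕ} (Ω : Set (EuclideanSpace ℝ (Fin n)))
    (q μ : ℝ) (f : EuclideanSpace ℝ (Fin n) → ℝ) : ℝ≥0∞ :=
  morreyNormE Ω q μ (fun y => (‖f y‖₊ : ℝ≥0∞))

/-- `min {p-1, λ/α}` with the convention `λ/α = ∞` if `α = 0`. -/
noncomputable def sMax (p lam α : ℝ) : ℝ :=
  if α = 0 then p - 1 else min (p - 1) (lam / α)

/-- The functional `Φ^{p,λ}_{θ,α}(f,s) = sup_{0<ε<s} ε^{θ/(p-ε)} ‖f‖_{L^{p-ε,λ-αε}}`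
for `ℝ≥0∞`-valued `f`. -/
noncomputable def grandPhiE {n : ℕ} (Ω : Set (EuclideanSpace ℝ (Fin n)))
    (p lam θ α : ℝ) (f : EuclideanSpace ℝ (Fin n) → ℝ≥0∞) (s : ℝ) : ℝ≥0∞ :=
  ⨆ ε ∈ Set.Ioo (0 : ℝ) s,
    ENNReal.ofReal (ε ^ (θ / (p - ε))) * morreyNormE Ω (p - ε) (lam - α * ε) f

/-- The functional `Φ^{p,λ}_{θ,α}(f,s)` for real-valued `f`. -/
noncomputable def grandPhi {n : ℕ} (Ω : Set (EuclideanSpace ℝ (Fin n)))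
    (p lam θ α : ℝ) (f : EuclideanSpace ℝ (Fin n) → ℝ) (s : ℝ) : ℝ≥0∞ :=
  grandPhiE Ω p lam θ α (fun y => (‖f y‖₊ : ℝ≥0∞)) s

/-- The grand grand Morrey norm `‖f‖_{L^{p),λ)}_{θ,α}(Ω)} = Φ^{p,λ}_{θ,α}(f, s_max)`. -/
noncomputable def grandNormE {n : ℕ} (Ω : Set (EuclideanSpace ℝ (Fin n)))
    (p lam θ α : ℝ) (f : EuclideanSpace ℝ (Fin n) → ℝ≥0∞) : ℝ≥0∞ :=
  grandPhiE Ω p lam θ α f (sMax p lam α)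

noncomputable def grandNorm {n : ℕ} (Ω : Set (EuclideanSpace ℝ (Fin n)))
    (p lam θ α : ℝ) (f : EuclideanSpace ℝ (Fin n) → ℝ) : ℝ≥0∞ :=
  grandPhi Ω p lam θ α f (sMax p lam α)

/-- The centered Hardy–Littlewood maximal operator on `Ω`:
`Mf(x) = sup_{0<r<diam Ω} |B̃(x,r)|⁻¹ ∫_{B̃(x,r)} |f|`. -/
noncomputable def maximalFn {n : ℕ} (Ω : Set (EuclideanSpace ℝ (Fin n)))
    (f : EuclideanSpace ℝ (Fin n) → ℝ) (x : EuclideanSpace ℝ (Fin n)) : ℝ≥0∞ :=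
  ⨆ r ∈ Set.Ioo (0 : ℝ) (Metric.diam Ω),
    (volume (Metric.ball x r ∩ Ω))⁻¹ * ∫⁻ y in Metric.ball x r ∩ Ω, (‖f y‖₊ : ℝ≥0∞)


/-- R1: `ε^{θ/(p-ε)} ≤ e^θ · s^{θ/(p-s)}` for `0 < ε ≤ s ≤ p-1`. -/
lemma aux_R1 {p θ ε s : ℝ} (hp : 1 < p) (hθ : 0 < θ) (hε : 0 < ε) (hεs : ε ≤ s)
    (hs : s ≤ p - 1) : ε ^ (θ / (p - ε)) ≤ Real.exp θ * s ^ (θ / (p - s)) := by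
  have hs0 : 0 < s := lt_of_lt_of_le hε hεs
  have hpε : 1 ≤ p - ε := by linarith
  have hps : 1 ≤ p - s := by linarith
  set t := θ / (p - ε) with ht_def
  set u := θ / (p - s) with hu_def
  have ht : 0 < t := div_pos hθ (by linarith)
  have hu : 0 < u := div_pos hθ (by linarith)
  have htu : t ≤ u := div_le_div_of_nonneg_left hθ.le (by linarith) (by linarith)
  have h1 : ε ^ t ≤ s ^ t := Real.rpow_le_rpow hε.le hεs ht.le
  have h2 : s ^ t = s ^ u * s ^ (t - u) := by
    rw [← Real.rpow_add hs0]; ring_nf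
  have h3 : s ^ (t - u) ≤ Real.exp θ := by
    rw [Real.rpow_def_of_pos hs0]
    apply Real.exp_le_exp.2
    rcases le_or_gt 1 s with h1s | h1s
    · have : 0 ≤ Real.log s := Real.log_nonneg h1s
      nlinarith
    · -- s < 1 : log s < 0
      have hlog : -Real.log s ≤ 1 / s := by
        have := Real.log_le_sub_one_of_pos (x := 1 / s) (by positivity)
        rw [Real.log_div one_ne_zero hs0.ne', Real.log_one] at this
        linarith
      have hut : u - t = θ * (s - ε) / ((p - s) * (p - ε)) := by
        rw [hu_def, ht_def]; field_simp; ring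
      have huts : u - t ≤ θ * s := by
        rw [hut]
        have hD : 1 ≤ (p - s) * (p - ε) := by nlinarith
        calc θ * (s - ε) / ((p - s) * (p - ε)) ≤ θ * (s - ε) / 1 := by
              apply div_le_div_of_nonneg_left (mul_nonneg hθ.le (by linarith)) one_pos hD
          _ = θ * (s - ε) := by ring
          _ ≤ θ * s := by nlinarith
      have hlog0 : 0 ≤ -Real.log s := by
        have := Real.log_nonpos hs0.le h1s.le; linarith
      have : (u - t) * (-Real.log s) ≤ (θ * s) * (1 / s) :=
        mul_le_mul huts hlog hlog0 (by positivity)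
      have hss : (θ * s) * (1 / s) = θ := by field_simp
      nlinarith
  calc ε ^ t ≤ s ^ t := h1
    _ = s ^ u * s ^ (t - u) := h2
    _ ≤ s ^ u * Real.exp θ := by
        apply mul_le_mul_of_nonneg_left h3 (Real.rpow_nonneg hs0.le u)
    _ = Real.exp θ * s ^ u := mul_comm _ _

/-- R2: `(σ/2)^{-θ/(p-σ/2)} ≤ 2^θ · m^θ · σ^{-θ/(p-σ)}` with `m = max 1 (p-1)`. -/
lemma aux_R2 {p θ σ : ℝ} (hp : 1 < p) (hθ : 0 < θ) (hσ : 0 < σ) (hs : σ ≤ p - 1) :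
    (σ / 2) ^ (-(θ / (p - σ / 2))) ≤
      (2 : ℝ) ^ θ * (max 1 (p - 1)) ^ θ * σ ^ (-(θ / (p - σ))) := by
  have hσ2 : 0 < σ / 2 := by linarith
  have hpσ : 1 ≤ p - σ := by linarith
  have hpσ2 : 1 ≤ p - σ / 2 := by linarith
  set a := θ / (p - σ / 2) with ha_def
  set b := θ / (p - σ) with hb_def
  have ha : 0 < a := div_pos hθ (by linarith)
  have hb : 0 < b := div_pos hθ (by linarith)
  have hab : a ≤ b := div_le_div_of_nonneg_left hθ.le (by linarith) (by linarith)
  have haθ : a ≤ θ := by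
    rw [ha_def]; calc θ / (p - σ / 2) ≤ θ / 1 := div_le_div_of_nonneg_left hθ.le one_pos hpσ2
      _ = θ := div_one θ
  have hbθ : b ≤ θ := by
    rw [hb_def]; calc θ / (p - σ) ≤ θ / 1 := div_le_div_of_nonneg_left hθ.le one_pos hpσ
      _ = θ := div_one θ
  have h1 : (σ / 2) ^ (-a) = 2 ^ a * σ ^ (-a) := by
    rw [div_eq_mul_inv σ 2, Real.mul_rpow hσ.le (by norm_num),
      Real.inv_rpow (by norm_num : (0:ℝ) ≤ 2), Real.rpow_neg (by norm_num : (0:ℝ) ≤ 2),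
      inv_inv, mul_comm]
  have h2 : (2 : ℝ) ^ a ≤ 2 ^ θ := Real.rpow_le_rpow_of_exponent_le one_le_two haθ
  have h3 : σ ^ (-a) = σ ^ (b - a) * σ ^ (-b) := by
    rw [← Real.rpow_add hσ]; ring_nf
  have h4 : σ ^ (b - a) ≤ (max 1 (p - 1)) ^ θ := by
    have hm1 : (1 : ℝ) ≤ max 1 (p - 1) := le_max_left _ _
    calc σ ^ (b - a) ≤ (max 1 (p - 1)) ^ (b - a) := by
          apply Real.rpow_le_rpow hσ.le (le_max_of_le_right hs) (by linarith)
      _ ≤ (max 1 (p - 1)) ^ θ :=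
          Real.rpow_le_rpow_of_exponent_le hm1 (by linarith)
  calc (σ / 2) ^ (-a) = 2 ^ a * (σ ^ (b - a) * σ ^ (-b)) := by rw [h1, h3]
    _ ≤ 2 ^ θ * ((max 1 (p - 1)) ^ θ * σ ^ (-b)) := by
        apply mul_le_mul h2 ?_ (by positivity) (by positivity)
        apply mul_le_mul_of_nonneg_right h4 (Real.rpow_nonneg hσ.le _)
    _ = 2 ^ θ * (max 1 (p - 1)) ^ θ * σ ^ (-b) := by ring

/-- Morrey space nesting via Hölder. -/
lemma morrey_nest {n : ℕ} (Ω : Set (EuclideanSpace ℝ (Fin n)))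
    {q q' μ μ' : ℝ} (hq'1 : 1 ≤ q') (hq : q' < q) (hμ'0 : 0 ≤ μ') (hμ : μ' ≤ μ) (hμ1 : μ ≤ 1)
    (g : EuclideanSpace ℝ (Fin n) → ℝ≥0∞) (hg : Measurable g) :
    morreyNormE Ω q' μ' g ≤
      (max 1 (volume (Metric.ball (0 : EuclideanSpace ℝ (Fin n)) (Metric.diam Ω)))) *
        morreyNormE Ω q μ g := by
  have hq'0 : 0 < q' := lt_of_lt_of_le one_pos hq'1
  have hq0 : 0 < q := lt_trans hq'0 hq
  set K : ℝ≥0∞ := max 1 (volume (Metric.ball (0 : EuclideanSpace ℝ (Fin n)) (Metric.diam Ω)))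
    with hK_def
  refine iSup₂_le fun x hx => iSup₂_le fun r hr => ?_
  set V : ℝ≥0∞ := volume (Metric.ball x r) with hV_def
  have hV0 : V ≠ 0 := (measure_ball_pos volume x hr.1).ne'
  have hVtop : V ≠ ⊤ := (measure_ball_lt_top).ne
  set I : ℝ≥0∞ := ∫⁻ y in Metric.ball x r ∩ Ω, g y ^ q with hI_def
  set W : ℝ≥0∞ := volume (Metric.ball x r ∩ Ω) with hW_def
  have hWV : W ≤ V := measure_mono inter_subset_left
  -- Hölder step
  have hconj : (q / q').HolderConjugate ((q/q') / (q/q' - 1)) :=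
    Real.HolderConjugate.conjExponent ((one_lt_div hq'0).2 hq)
  have holder : (∫⁻ y in Metric.ball x r ∩ Ω, g y ^ q') ≤
      I ^ (q' / q) * W ^ (1 - q' / q) := by
    have := ENNReal.lintegral_mul_le_Lp_mul_Lq (volume.restrict (Metric.ball x r ∩ Ω)) hconj
      (f := fun y => g y ^ q') (g := fun _ => 1)
      ((hg.pow_const q').aemeasurable) aemeasurable_const
    simp only [Pi.mul_apply, mul_one, ENNReal.one_rpow, lintegral_one,
      Measure.restrict_apply MeasurableSet.univ, univ_inter] at this
    calc (∫⁻ y in Metric.ball x r ∩ Ω, g y ^ q')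
        ≤ (∫⁻ y in Metric.ball x r ∩ Ω, (g y ^ q') ^ (q / q')) ^ (1/(q/q')) *
          W ^ (1 / ((q/q') / (q/q' - 1))) := this
      _ = I ^ (q' / q) * W ^ (1 - q' / q) := by
          congr 1
          · congr 1
            · apply lintegral_congr fun y => ?_
              rw [← ENNReal.rpow_mul]
              congr 1
              field_simp
            · rw [one_div_div]
          · congr 1
            rw [one_div_div]
            field_simp
  -- bound the generic term
  have h1q' : (0:ℝ) ≤ 1 / q' := by positivity
  have h1q : (0:ℝ) ≤ 1 / q := by positivity
  set c : ℝ := (1 - μ') / q' - (1 - μ) / q with hc_def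
  have hμ'1 : μ' ≤ 1 := le_trans hμ hμ1
  have hc0 : 0 ≤ c := by
    rw [hc_def, sub_nonneg]
    exact div_le_div₀ (by linarith) (by linarith) hq'0 hq.le
  have hc1 : c ≤ 1 := by
    have h1 : (1 - μ') / q' ≤ 1 := div_le_one_of_le₀ (by linarith) hq'0.le
    have h2 : 0 ≤ (1 - μ) / q := div_nonneg (by linarith) hq0.le
    rw [hc_def]; linarith
  have hTS : (V ^ (-μ) * I) ^ (1 / q) ≤ morreyNormE Ω q μ g := by
    rw [morreyNormE]
    exact le_iSup₂_of_le x hx (le_iSup₂_of_le r hr le_rfl)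
  have hVK : V ≤ K := by
    rw [hV_def]
    calc volume (Metric.ball x r) ≤ volume (Metric.ball x (Metric.diam Ω)) :=
          measure_mono (ball_subset_ball hr.2)
      _ = volume (Metric.ball (0 : EuclideanSpace ℝ (Fin n)) (Metric.diam Ω)) :=
          Measure.addHaar_ball_center volume x _
      _ ≤ K := le_max_right _ _
  have hVcK : V ^ c ≤ K := by
    calc V ^ c ≤ K ^ c := ENNReal.rpow_le_rpow hVK hc0
      _ ≤ K ^ (1:ℝ) := ENNReal.rpow_le_rpow_of_exponent_le (le_max_left _ _) hc1
      _ = K := ENNReal.rpow_one K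
  have step1 : (V ^ (-μ') * ∫⁻ y in Metric.ball x r ∩ Ω, g y ^ q') ^ (1 / q')
      ≤ (V ^ (-μ') * (I ^ (q' / q) * V ^ (1 - q' / q))) ^ (1 / q') := by
    apply ENNReal.rpow_le_rpow _ h1q'
    apply mul_le_mul_right
    refine holder.trans (mul_le_mul_right ?_ _)
    exact ENNReal.rpow_le_rpow hWV (by
      have : q' / q ≤ 1 := div_le_one_of_le₀ hq.le hq0.le
      linarith)
  have step2 : (V ^ (-μ') * (I ^ (q' / q) * V ^ (1 - q' / q))) ^ (1 / q')
      = V ^ c * (V ^ (-μ) * I) ^ (1 / q) := by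
    calc (V ^ (-μ') * (I ^ (q' / q) * V ^ (1 - q' / q))) ^ (1 / q')
        = (V ^ (-μ') * V ^ (1 - q' / q) * I ^ (q' / q)) ^ (1 / q') := by ring_nf
      _ = (V ^ (-μ' + (1 - q' / q)) * I ^ (q' / q)) ^ (1 / q') := by
          rw [ENNReal.rpow_add _ _ hV0 hVtop]
      _ = V ^ ((-μ' + (1 - q' / q)) * (1 / q')) * I ^ (q' / q * (1 / q')) := by
          rw [ENNReal.mul_rpow_of_nonneg _ _ h1q', ← ENNReal.rpow_mul, ← ENNReal.rpow_mul]
      _ = V ^ (c + -μ * (1 / q)) * I ^ (1 / q) := by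
          congr 1
          · congr 1
            rw [hc_def]
            field_simp
            ring
          · congr 1
            field_simp
      _ = V ^ c * (V ^ (-μ * (1 / q)) * I ^ (1 / q)) := by
          rw [ENNReal.rpow_add _ _ hV0 hVtop, mul_assoc]
      _ = V ^ c * ((V ^ (-μ)) ^ (1 / q) * I ^ (1 / q)) := by
          rw [← ENNReal.rpow_mul]
      _ = V ^ c * (V ^ (-μ) * I) ^ (1 / q) := by
          rw [← ENNReal.mul_rpow_of_nonneg _ _ h1q]
  calc (V ^ (-μ') * ∫⁻ y in Metric.ball x r ∩ Ω, g y ^ q') ^ (1 / q')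
      ≤ V ^ c * (V ^ (-μ) * I) ^ (1 / q) := step1.trans_eq step2
    _ ≤ K * morreyNormE Ω q μ g := mul_le_mul' hVcK hTS

/-- Lemma on domination of `Φ(f,s)` by `Φ(f,σ)` for `σ < s`.
For a bounded open `Ω ⊆ ℝⁿ`, `1 < p`, `θ > 0`, `α ≥ 0`, `0 ≤ λ < 1`, there is `C > 0`
depending only on `n, p, λ, θ, α` and `diam Ω` such that for all
`0 < σ < s < min{p-1, λ/α}` and all measurable `f`,
`Φ^{p,λ}_{θ,α}(f,s) ≤ C s^{θ/(p-s)} σ^{-θ/(p-σ)} Φ^{p,λ}_{θ,α}(f,σ)`. -/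
theorem grandPhi_dominance {n : ℕ} (Ω : Set (EuclideanSpace ℝ (Fin n)))
    (hΩo : IsOpen Ω) (hΩb : Bornology.IsBounded Ω)
    (p θ α lam : ℝ) (hp : 1 < p) (hθ : 0 < θ) (hα : 0 ≤ α)
    (hlam0 : 0 ≤ lam) (hlam1 : lam < 1) :
    ∃ C : ℝ, 0 < C ∧
      ∀ σ s : ℝ, 0 < σ → σ < s → s < sMax p lam α →
        ∀ f : EuclideanSpace ℝ (Fin n) → ℝ, Measurable f →
          grandPhi Ω p lam θ α f s ≤
            ENNReal.ofReal (C * s ^ (θ / (p - s)) * σ ^ (-(θ / (p - σ)))) *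
              grandPhi Ω p lam θ α f σ := by
  set vK : ℝ≥0∞ :=
    max 1 (volume (Metric.ball (0 : EuclideanSpace ℝ (Fin n)) (Metric.diam Ω))) with hvK
  have hvKtop : vK ≠ ⊤ := by
    rw [hvK]
    simp only [ne_eq, max_eq_top, not_or]
    exact ⟨one_ne_top, measure_ball_lt_top.ne⟩
  set Kr : ℝ := vK.toReal with hKr
  have hKr1 : (1 : ℝ) ≤ Kr := by
    have := ENNReal.toReal_mono hvKtop (le_max_left 1
      (volume (Metric.ball (0 : EuclideanSpace ℝ (Fin n)) (Metric.diam Ω))))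
    simpa using this
  have hofKr : ENNReal.ofReal Kr = vK := ENNReal.ofReal_toReal hvKtop
  have h2θ : (1:ℝ) ≤ 2 ^ θ := Real.one_le_rpow one_le_two hθ.le
  have hmθ : (1:ℝ) ≤ (max 1 (p - 1)) ^ θ := Real.one_le_rpow (le_max_left _ _) hθ.le
  set C : ℝ := Real.exp θ * 2 ^ θ * (max 1 (p - 1)) ^ θ * Kr with hC
  have hexpC : Real.exp θ ≤ C := by
    have h3 : (1:ℝ) ≤ 2 ^ θ * (max 1 (p - 1)) ^ θ := by nlinarith
    have h4 : (1:ℝ) ≤ 2 ^ θ * (max 1 (p - 1)) ^ θ * Kr := by nlinarith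
    have := mul_le_mul_of_nonneg_left h4 (Real.exp_pos θ).le
    rw [hC]
    nlinarith [Real.exp_pos θ]
  have hCpos : 0 < C := lt_of_lt_of_le (Real.exp_pos θ) hexpC
  refine ⟨C, hCpos, fun σ s hσ hσs hs f hf => ?_⟩
  have hsp : s < p - 1 := by
    rcases eq_or_ne α 0 with h0 | h0
    · simpa [sMax, h0] using hs
    · rw [sMax, if_neg h0] at hs
      exact lt_of_lt_of_le hs (min_le_left _ _)
  have hσp : σ < p - 1 := hσs.trans hsp
  have hlamε : ∀ ε : ℝ, 0 ≤ ε → ε ≤ s → 0 ≤ lam - α * ε := by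
    intro ε hε0 hεs
    rcases eq_or_ne α 0 with h0 | h0
    · simpa [h0] using hlam0
    · have hα0 : 0 < α := lt_of_le_of_ne hα (Ne.symm h0)
      rw [sMax, if_neg h0] at hs
      have hsl : s < lam / α := lt_of_lt_of_le hs (min_le_right _ _)
      have h1 : α * s < lam := by
        rw [mul_comm]
        exact (lt_div_iff₀ hα0).1 hsl
      nlinarith [mul_le_mul_of_nonneg_left hεs hα]
  -- the constant inequality, branch 1
  have hreal1 : 1 ≤ C * s ^ (θ / (p - s)) * σ ^ (-(θ / (p - σ))) := by
    have hR : σ ^ (θ / (p - σ)) ≤ Real.exp θ * s ^ (θ / (p - s)) :=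
      aux_R1 hp hθ hσ hσs.le hsp.le
    have hR2 : σ ^ (θ / (p - σ)) ≤ C * s ^ (θ / (p - s)) :=
      hR.trans (mul_le_mul_of_nonneg_right hexpC (Real.rpow_nonneg (by linarith) _))
    calc (1:ℝ) = σ ^ (θ / (p - σ)) * σ ^ (-(θ / (p - σ))) := by
          rw [← Real.rpow_add hσ]; simp
      _ ≤ C * s ^ (θ / (p - s)) * σ ^ (-(θ / (p - σ))) :=
          mul_le_mul_of_nonneg_right hR2 (Real.rpow_nonneg hσ.le _)
  simp only [grandPhi]
  set g : EuclideanSpace ℝ (Fin n) → ℝ≥0∞ := fun y => (‖f y‖₊ : ℝ≥0∞) with hg_def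
  have hg : Measurable g := hf.nnnorm.coe_nnreal_ennreal
  set Φσ : ℝ≥0∞ := grandPhiE Ω p lam θ α g σ with hΦσ
  rw [grandPhiE]
  refine iSup₂_le fun ε hε => ?_
  rcases lt_or_ge ε σ with hεσ | hσε
  · -- small ε : this term already appears in Φσ
    have hterm : ENNReal.ofReal (ε ^ (θ / (p - ε))) * morreyNormE Ω (p - ε) (lam - α * ε) g
        ≤ Φσ := by
      rw [hΦσ, grandPhiE]
      exact le_iSup₂_of_le ε ⟨hε.1, hεσ⟩ le_rfl
    calc ENNReal.ofReal (ε ^ (θ / (p - ε))) * morreyNormE Ω (p - ε) (lam - α * ε) g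
        ≤ Φσ := hterm
      _ = 1 * Φσ := (one_mul _).symm
      _ ≤ ENNReal.ofReal (C * s ^ (θ / (p - s)) * σ ^ (-(θ / (p - σ)))) * Φσ :=
          mul_le_mul_left (ENNReal.one_le_ofReal.2 hreal1) _
  · -- σ ≤ ε < s : Hölder nesting against exponent σ/2
    have hεs : ε < s := hε.2
    have hnest := morrey_nest Ω (q := p - σ / 2) (q' := p - ε)
      (μ := lam - α * (σ / 2)) (μ' := lam - α * ε)
      (by linarith : (1:ℝ) ≤ p - ε) (by linarith : p - ε < p - σ / 2)
      (hlamε ε hε.1.le hεs.le)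
      (by nlinarith : lam - α * ε ≤ lam - α * (σ / 2))
      (by nlinarith : lam - α * (σ / 2) ≤ 1) g hg
    set w : ℝ := (σ / 2) ^ (θ / (p - σ / 2)) with hw_def
    have hw0 : 0 < w := Real.rpow_pos_of_pos (by linarith) _
    set M : ℝ≥0∞ := morreyNormE Ω (p - σ / 2) (lam - α * (σ / 2)) g with hM_def
    have hterm2 : ENNReal.ofReal w * M ≤ Φσ := by
      rw [hΦσ, grandPhiE, hM_def, hw_def]
      exact le_iSup₂_of_le (σ / 2) ⟨by linarith, by linarith⟩ le_rfl
    have hMB : M ≤ ENNReal.ofReal w⁻¹ * Φσ := by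
      have hcancel : ENNReal.ofReal w⁻¹ * (ENNReal.ofReal w * M) = M := by
        rw [← mul_assoc, ← ENNReal.ofReal_mul (by positivity), inv_mul_cancel₀ hw0.ne',
          ENNReal.ofReal_one, one_mul]
      calc M = ENNReal.ofReal w⁻¹ * (ENNReal.ofReal w * M) := hcancel.symm
        _ ≤ ENNReal.ofReal w⁻¹ * Φσ := mul_le_mul_right hterm2 _
    -- real estimate
    have hreal2 : ε ^ (θ / (p - ε)) * (Kr * w⁻¹) ≤
        C * s ^ (θ / (p - s)) * σ ^ (-(θ / (p - σ))) := by
      have hwinv : w⁻¹ = (σ / 2) ^ (-(θ / (p - σ / 2))) := by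
        rw [hw_def, ← Real.rpow_neg (by linarith)]
      have hR1 : ε ^ (θ / (p - ε)) ≤ Real.exp θ * s ^ (θ / (p - s)) :=
        aux_R1 hp hθ hε.1 hεs.le hsp.le
      have hR2 : w⁻¹ ≤ (2:ℝ) ^ θ * (max 1 (p - 1)) ^ θ * σ ^ (-(θ / (p - σ))) := by
        rw [hwinv]; exact aux_R2 hp hθ hσ hσp.le
      have h1 : ε ^ (θ / (p - ε)) * (Kr * w⁻¹) ≤
          (Real.exp θ * s ^ (θ / (p - s))) *
            (Kr * ((2:ℝ) ^ θ * (max 1 (p - 1)) ^ θ * σ ^ (-(θ / (p - σ))))) := by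
        apply mul_le_mul hR1 ?_ ?_ ?_
        · exact mul_le_mul_of_nonneg_left hR2 (by linarith)
        · exact mul_nonneg (by linarith) (inv_nonneg.2 hw0.le)
        · exact mul_nonneg (Real.exp_pos θ).le (Real.rpow_nonneg (by linarith) _)
      calc ε ^ (θ / (p - ε)) * (Kr * w⁻¹) ≤ _ := h1
        _ = C * s ^ (θ / (p - s)) * σ ^ (-(θ / (p - σ))) := by rw [hC]; ring
    calc ENNReal.ofReal (ε ^ (θ / (p - ε))) * morreyNormE Ω (p - ε) (lam - α * ε) g
        ≤ ENNReal.ofReal (ε ^ (θ / (p - ε))) * (vK * M) := mul_le_mul_right hnest _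
      _ ≤ ENNReal.ofReal (ε ^ (θ / (p - ε))) * (vK * (ENNReal.ofReal w⁻¹ * Φσ)) := by
          exact mul_le_mul_right (mul_le_mul_right hMB _) _
      _ = ENNReal.ofReal (ε ^ (θ / (p - ε)) * (Kr * w⁻¹)) * Φσ := by
          rw [ENNReal.ofReal_mul (Real.rpow_nonneg hε.1.le _),
            ENNReal.ofReal_mul (by linarith : (0:ℝ) ≤ Kr), hofKr]
          ring
      _ ≤ ENNReal.ofReal (C * s ^ (θ / (p - s)) * σ ^ (-(θ / (p - σ)))) * Φσ :=
          mul_le_mul_left (ENNReal.ofReal_le_ofReal hreal2) _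
end

section
/- Let Ω be a bounded open set in ℝⁿ with diameter d, and let 1 < p < ∞, θ > 0, α ≥ 0, 0 ≤ λ < 1. There exists a constant C, depending only on n, p, λ, θ, α and d (but not on f or σ), such that for every 0 < σ < min{p−1, λ/α} and every measurable function f : Ω → ℝ, the grand grand Morrey norm satisfies ‖f‖_{L^{p),λ)}_{θ,α}(Ω)} ≤ C · σ^{−θ/(p−σ)} · Φ^{p,λ}_{θ,α}(f, σ). -/
open MeasureTheory Metric Set ENNReal

/-- If `0 < ε ≤ p-1 < p`, then `ε ^ (θ/(p-ε)) ≤ max 1 ((p-1)^θ)`. -/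
lemma rpow_aux1 {p θ : ℝ} (hp : 1 < p) (hθ : 0 < θ) {ε : ℝ} (hε : 0 < ε)
    (hεlt : ε ≤ p - 1) : ε ^ (θ / (p - ε)) ≤ max 1 ((p - 1) ^ θ) := by
  have hpε : (1:ℝ) ≤ p - ε := by linarith
  rcases le_or_gt ε 1 with h | h
  · exact le_max_of_le_left
      (Real.rpow_le_one hε.le h (div_nonneg hθ.le (by linarith)))
  · refine le_max_of_le_right ?_
    calc ε ^ (θ / (p - ε)) ≤ ε ^ θ :=
          Real.rpow_le_rpow_of_exponent_le h.le (div_le_self hθ.le hpε)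
      _ ≤ (p - 1) ^ θ := Real.rpow_le_rpow hε.le hεlt hθ.le

lemma rpow_aux2 {p θ : ℝ} (hp : 1 < p) (hθ : 0 < θ) {σ : ℝ} (hσ : 0 < σ)
    (hσlt : σ < p - 1) :
    (σ/2) ^ (-(θ/(p - σ/2))) ≤ (2:ℝ)^θ * (max 1 ((p-1)^θ)) * σ ^ (-(θ/(p-σ))) := by
  have h1 : (1:ℝ) < p - σ := by linarith
  have h2 : (1:ℝ) < p - σ/2 := by linarith
  have hab : θ/(p - σ/2) ≤ θ/(p - σ) := by
    apply div_le_div_of_nonneg_left hθ.le (by linarith) (by linarith)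
  have hbθ : θ/(p - σ) ≤ θ := div_le_self hθ.le h1.le
  have e1 : (σ/2) ^ (-(θ/(p - σ/2))) = σ ^ (-(θ/(p - σ/2))) * 2 ^ (θ/(p - σ/2)) := by
    rw [div_eq_mul_inv, Real.mul_rpow hσ.le (by norm_num),
      Real.inv_rpow (by norm_num : (0:ℝ) ≤ 2), Real.rpow_neg (by norm_num : (0:ℝ) ≤ 2),
      inv_inv]
  have e2 : σ ^ (-(θ/(p - σ/2)))
      = σ ^ (θ/(p-σ) - θ/(p - σ/2)) * σ ^ (-(θ/(p-σ))) := by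
    rw [← Real.rpow_add hσ]; ring_nf
  have h2a : (2:ℝ) ^ (θ/(p - σ/2)) ≤ 2 ^ θ :=
    Real.rpow_le_rpow_of_exponent_le one_le_two (hab.trans hbθ)
  have hσba : σ ^ (θ/(p-σ) - θ/(p - σ/2)) ≤ max 1 ((p-1)^θ) := by
    rcases le_or_gt σ 1 with h | h
    · exact le_max_of_le_left (Real.rpow_le_one hσ.le h (by linarith))
    · refine le_max_of_le_right ?_
      calc σ ^ (θ/(p-σ) - θ/(p - σ/2)) ≤ σ ^ θ :=
            Real.rpow_le_rpow_of_exponent_le h.le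
              (by
                have := div_nonneg hθ.le (le_of_lt (by linarith : (0:ℝ) < p - σ/2))
                linarith)
        _ ≤ (p-1) ^ θ := Real.rpow_le_rpow hσ.le hσlt.le hθ.le
  calc (σ/2) ^ (-(θ/(p - σ/2)))
      = 2 ^ (θ/(p - σ/2)) * σ ^ (θ/(p-σ) - θ/(p - σ/2)) * σ ^ (-(θ/(p-σ))) := by
        rw [e1, e2]; ring
    _ ≤ (2:ℝ)^θ * (max 1 ((p-1)^θ)) * σ ^ (-(θ/(p-σ))) := by
        apply mul_le_mul_of_nonneg_right _ (Real.rpow_nonneg hσ.le _)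
        exact mul_le_mul h2a hσba (Real.rpow_nonneg hσ.le _) (by positivity)

/-- Hölder-type comparison on a finite-measure set. -/
lemma ball_est {X : Type*} [MeasurableSpace X] (μ : Measure X) (f : X → ℝ)
    (hf : Measurable f) {q1 q2 : ℝ} (h1 : 1 ≤ q1) (h12 : q1 ≤ q2)
    {v : ℝ≥0∞} (hv0 : v ≠ 0) (hvt : v ≠ ∞) (hμv : μ Set.univ ≤ v)
    {μ1 μ2 E : ℝ} (he0 : 0 ≤ (1 - μ1)/q1 - (1 - μ2)/q2)
    (heE : (1 - μ1)/q1 - (1 - μ2)/q2 ≤ E)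
    {M : ℝ} (hM : 1 ≤ M) (hvM : v ≤ ENNReal.ofReal M) :
    (v ^ (-μ1) * ∫⁻ y, (‖f y‖₊ : ℝ≥0∞) ^ q1 ∂μ) ^ (1/q1) ≤
      ENNReal.ofReal (M ^ E) * (v ^ (-μ2) * ∫⁻ y, (‖f y‖₊ : ℝ≥0∞) ^ q2 ∂μ) ^ (1/q2) := by
  have hq1 : (0:ℝ) < q1 := lt_of_lt_of_le one_pos h1
  have hq2 : (0:ℝ) < q2 := lt_of_lt_of_le hq1 h12
  have hA1 : (∫⁻ y, (‖f y‖₊ : ℝ≥0∞) ^ q1 ∂μ) ^ (1/q1)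
      = eLpNorm f (ENNReal.ofReal q1) μ := by
    rw [eLpNorm_eq_lintegral_rpow_enorm_toReal (by simp [hq1]) ENNReal.ofReal_ne_top,
      ENNReal.toReal_ofReal hq1.le]
    rfl
  have hA2 : (∫⁻ y, (‖f y‖₊ : ℝ≥0∞) ^ q2 ∂μ) ^ (1/q2)
      = eLpNorm f (ENNReal.ofReal q2) μ := by
    rw [eLpNorm_eq_lintegral_rpow_enorm_toReal (by simp [hq2]) ENNReal.ofReal_ne_top,
      ENNReal.toReal_ofReal hq2.le]
    rfl
  have hsub : (0:ℝ) ≤ 1/q1 - 1/q2 := by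
    have : 1/q2 ≤ 1/q1 := by
      apply div_le_div_of_nonneg_left (by norm_num) hq1 h12
    linarith
  have step : (∫⁻ y, (‖f y‖₊ : ℝ≥0∞) ^ q1 ∂μ) ^ (1/q1)
      ≤ (∫⁻ y, (‖f y‖₊ : ℝ≥0∞) ^ q2 ∂μ) ^ (1/q2) * v ^ (1/q1 - 1/q2) := by
    rw [hA1, hA2]
    refine (eLpNorm_le_eLpNorm_mul_rpow_measure_univ (ENNReal.ofReal_le_ofReal h12)
      hf.aestronglyMeasurable).trans ?_
    rw [ENNReal.toReal_ofReal hq1.le, ENNReal.toReal_ofReal hq2.le]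
    exact mul_le_mul_right (ENNReal.rpow_le_rpow hμv hsub) _
  set I1 := ∫⁻ y, (‖f y‖₊ : ℝ≥0∞) ^ q1 ∂μ with hI1
  set I2 := ∫⁻ y, (‖f y‖₊ : ℝ≥0∞) ^ q2 ∂μ with hI2
  set e : ℝ := (1 - μ1)/q1 - (1 - μ2)/q2 with he
  have hvE : v ^ e ≤ ENNReal.ofReal (M ^ E) := by
    calc v ^ e ≤ (ENNReal.ofReal M) ^ e := ENNReal.rpow_le_rpow hvM he0
      _ ≤ (ENNReal.ofReal M) ^ E :=
          ENNReal.rpow_le_rpow_of_exponent_le (ENNReal.one_le_ofReal.2 hM) heE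
      _ = ENNReal.ofReal (M ^ E) :=
          ENNReal.ofReal_rpow_of_pos (lt_of_lt_of_le one_pos hM)
  calc (v ^ (-μ1) * I1) ^ (1/q1)
      = v ^ (-μ1 * (1/q1)) * I1 ^ (1/q1) := by
        rw [ENNReal.mul_rpow_of_nonneg _ _ (by positivity), ← ENNReal.rpow_mul]
    _ ≤ v ^ (-μ1 * (1/q1)) * (I2 ^ (1/q2) * v ^ (1/q1 - 1/q2)) := mul_le_mul_right step _
    _ = v ^ (-μ1 * (1/q1) + (1/q1 - 1/q2)) * I2 ^ (1/q2) := by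
        rw [ENNReal.rpow_add _ _ hv0 hvt]; ring
    _ = v ^ e * (v ^ (-μ2 * (1/q2)) * I2 ^ (1/q2)) := by
        rw [show -μ1 * (1/q1) + (1/q1 - 1/q2) = e + -μ2 * (1/q2) by rw [he]; ring,
          ENNReal.rpow_add _ _ hv0 hvt, mul_assoc]
    _ ≤ ENNReal.ofReal (M ^ E) * (v ^ (-μ2 * (1/q2)) * I2 ^ (1/q2)) :=
        mul_le_mul_left hvE _
    _ = ENNReal.ofReal (M ^ E) * (v ^ (-μ2) * I2) ^ (1/q2) := by
        rw [ENNReal.mul_rpow_of_nonneg _ _ (by positivity : (0:ℝ) ≤ 1/q2),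
          ← ENNReal.rpow_mul]

lemma morrey_mono {n : ℕ} (Ω : Set (EuclideanSpace ℝ (Fin n)))
    (f : EuclideanSpace ℝ (Fin n) → ℝ) (hf : Measurable f)
    {q1 q2 μ1 μ2 E M : ℝ} (h1 : 1 ≤ q1) (h12 : q1 ≤ q2)
    (he0 : 0 ≤ (1 - μ1)/q1 - (1 - μ2)/q2) (heE : (1 - μ1)/q1 - (1 - μ2)/q2 ≤ E)
    (hM : 1 ≤ M)
    (hMd : (volume (Metric.ball (0 : EuclideanSpace ℝ (Fin n)) (Metric.diam Ω))).toReal ≤ M) :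
    morreyNormE Ω q1 μ1 (fun y => (‖f y‖₊ : ℝ≥0∞)) ≤
      ENNReal.ofReal (M ^ E) * morreyNormE Ω q2 μ2 (fun y => (‖f y‖₊ : ℝ≥0∞)) := by
  rw [morreyNormE, morreyNormE]
  refine iSup₂_le fun x hx => iSup₂_le fun r hr => ?_
  have hv0 : volume (Metric.ball x r) ≠ 0 := (measure_ball_pos volume x hr.1).ne'
  have hvt : volume (Metric.ball x r) ≠ ∞ := measure_ball_lt_top.ne
  have hvM : volume (Metric.ball x r) ≤ ENNReal.ofReal M := by
    calc volume (Metric.ball x r) ≤ volume (Metric.ball x (Metric.diam Ω)) :=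
          measure_mono (Metric.ball_subset_ball hr.2)
      _ = volume (Metric.ball (0 : EuclideanSpace ℝ (Fin n)) (Metric.diam Ω)) :=
          MeasureTheory.Measure.addHaar_ball_center volume x _
      _ ≤ ENNReal.ofReal M := by
          rw [← ENNReal.ofReal_toReal measure_ball_lt_top.ne]
          exact ENNReal.ofReal_le_ofReal hMd
  have hμv : (volume.restrict (Metric.ball x r ∩ Ω)) Set.univ ≤ volume (Metric.ball x r) := by
    rw [Measure.restrict_apply_univ]
    exact measure_mono Set.inter_subset_left
  refine (ball_est (volume.restrict (Metric.ball x r ∩ Ω)) f hf h1 h12 hv0 hvt hμv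
    he0 heE hM hvM).trans ?_
  refine mul_le_mul_right ?_ _
  exact le_iSup₂_of_le x hx (le_iSup₂_of_le r hr le_rfl)

set_option maxHeartbeats 1000000 in
/-- Domination of the grand grand Morrey norm.
For a bounded open `Ω ⊆ ℝⁿ`, `1 < p`, `θ > 0`, `α ≥ 0`, `0 ≤ λ < 1`, there is `C > 0`
depending only on `n, p, λ, θ, α` and `diam Ω` such that for all
`0 < σ < min{p-1, λ/α}` and all measurable `f`,
`‖f‖_{L^{p),λ)}_{θ,α}(Ω)} ≤ C σ^{-θ/(p-σ)} Φ^{p,λ}_{θ,α}(f,σ)`. -/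
theorem grandNorm_dominance {n : ℕ} (Ω : Set (EuclideanSpace ℝ (Fin n)))
    (hΩo : IsOpen Ω) (hΩb : Bornology.IsBounded Ω)
    (p θ α lam : ℝ) (hp : 1 < p) (hθ : 0 < θ) (hα : 0 ≤ α)
    (hlam0 : 0 ≤ lam) (hlam1 : lam < 1) :
    ∃ C : ℝ, 0 < C ∧
      ∀ σ : ℝ, 0 < σ → σ < sMax p lam α →
        ∀ f : EuclideanSpace ℝ (Fin n) → ℝ, Measurable f →
          grandNorm Ω p lam θ α f ≤
            ENNReal.ofReal (C * σ ^ (-(θ / (p - σ)))) * grandPhi Ω p lam θ α f σ := by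
  classical
  set K1 : ℝ := max 1 ((p-1)^θ) with hK1def
  set M : ℝ := max 1
    ((volume (Metric.ball (0 : EuclideanSpace ℝ (Fin n)) (Metric.diam Ω))).toReal) with hMdef
  set E : ℝ := 1 + α * p with hEdef
  have hK1one : (1:ℝ) ≤ K1 := le_max_left _ _
  have hMone : (1:ℝ) ≤ M := le_max_left _ _
  have hK1pos : (0:ℝ) < K1 := lt_of_lt_of_le one_pos hK1one
  have hMpos : (0:ℝ) < M := lt_of_lt_of_le one_pos hMone
  have hME : (1:ℝ) ≤ M ^ E := Real.one_le_rpow hMone (by nlinarith)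
  have h2θ : (1:ℝ) ≤ (2:ℝ) ^ θ := Real.one_le_rpow one_le_two hθ.le
  have hMEpos : (0:ℝ) < M ^ E := lt_of_lt_of_le one_pos hME
  have h2θpos : (0:ℝ) < (2:ℝ) ^ θ := lt_of_lt_of_le one_pos h2θ
  refine ⟨K1 * K1 * 2^θ * M^E, by positivity, ?_⟩
  intro σ hσ hσs f hf
  have hsle : sMax p lam α ≤ p - 1 := by
    rw [sMax]; split_ifs with h
    · exact le_rfl
    · exact min_le_left _ _
  have hσp : σ < p - 1 := lt_of_lt_of_le hσs hsle
  have hC' : K1 ≤ K1*K1*2^θ*M^E := by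
    have h : K1*1*1 ≤ K1*K1*2^θ := by
      apply mul_le_mul (mul_le_mul le_rfl hK1one zero_le_one hK1pos.le) h2θ
        zero_le_one (by positivity)
    have h2 : K1*1*1*1 ≤ (K1*K1*2^θ)*M^E := by
      apply mul_le_mul h hME zero_le_one (by positivity)
    calc K1 = K1*1*1*1 := by ring
      _ ≤ K1*K1*2^θ*M^E := h2
  unfold grandNorm grandPhi grandPhiE
  refine iSup₂_le fun ε hε => ?_
  obtain ⟨hε0, hεs⟩ := hε
  have hεp : ε < p - 1 := lt_of_lt_of_le hεs hsle
  rcases lt_or_ge ε σ with hcase | hcase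
  · have hone : (1:ℝ≥0∞) ≤ ENNReal.ofReal (K1*K1*2^θ*M^E * σ^(-(θ/(p-σ)))) := by
      rw [ENNReal.one_le_ofReal]
      have hK : σ ^ (θ/(p-σ)) ≤ K1 := rpow_aux1 hp hθ hσ hσp.le
      have hidentity : σ ^ (θ/(p-σ)) * σ ^ (-(θ/(p-σ))) = 1 := by
        rw [← Real.rpow_add hσ]; simp
      calc (1:ℝ) = σ^(θ/(p-σ)) * σ^(-(θ/(p-σ))) := hidentity.symm
        _ ≤ (K1*K1*2^θ*M^E) * σ^(-(θ/(p-σ))) :=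
            mul_le_mul_of_nonneg_right (hK.trans hC') (Real.rpow_nonneg hσ.le _)
    calc ENNReal.ofReal (ε ^ (θ / (p - ε)))
            * morreyNormE Ω (p - ε) (lam - α * ε) (fun y => (‖f y‖₊ : ℝ≥0∞))
        ≤ ⨆ ε' ∈ Set.Ioo (0:ℝ) σ, ENNReal.ofReal (ε' ^ (θ / (p - ε')))
            * morreyNormE Ω (p - ε') (lam - α * ε') (fun y => (‖f y‖₊ : ℝ≥0∞)) :=
          le_iSup₂_of_le ε ⟨hε0, hcase⟩ le_rfl
      _ ≤ _ := le_mul_of_one_le_left zero_le hone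
  · -- σ ≤ ε : use the Hölder comparison with exponent p - σ/2
    have hq1 : (1:ℝ) ≤ p - ε := by linarith
    have hq12 : p - ε ≤ p - σ/2 := by linarith
    have hq2pos : (0:ℝ) < p - σ/2 := by linarith
    have hq1pos : (0:ℝ) < p - ε := by linarith
    have h1μ2 : (0:ℝ) ≤ 1 - (lam - α*(σ/2)) := by nlinarith
    have h1μ1 : (0:ℝ) ≤ 1 - (lam - α*ε) := by nlinarith
    have he0 : 0 ≤ (1 - (lam - α*ε))/(p-ε) - (1 - (lam - α*(σ/2)))/(p - σ/2) := by
      rw [sub_nonneg, div_le_div_iff₀ hq2pos hq1pos]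
      nlinarith [mul_nonneg (sub_nonneg.2 hlam1.le) (by linarith : (0:ℝ) ≤ ε - σ/2),
        mul_nonneg (mul_nonneg hα (by linarith : (0:ℝ) ≤ p))
          (by linarith : (0:ℝ) ≤ ε - σ/2)]
    have heE : (1 - (lam - α*ε))/(p-ε) - (1 - (lam - α*(σ/2)))/(p - σ/2) ≤ E := by
      have hd1 : (1 - (lam - α*ε))/(p-ε) ≤ 1 - (lam - α*ε) := div_le_self h1μ1 hq1
      have hd2 : 0 ≤ (1 - (lam - α*(σ/2)))/(p - σ/2) := div_nonneg h1μ2 hq2pos.le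
      have hup : 1 - (lam - α*ε) ≤ 1 + α*p := by nlinarith
      rw [hEdef]; linarith
    have hMd : (volume (Metric.ball (0 : EuclideanSpace ℝ (Fin n))
        (Metric.diam Ω))).toReal ≤ M := le_max_right _ _
    have hmor := morrey_mono Ω f hf hq1 hq12 he0 heE hMone hMd
    have hεK : ε ^ (θ/(p-ε)) ≤ K1 := rpow_aux1 hp hθ hε0 hεp.le
    have haux2 := rpow_aux2 hp hθ hσ hσp
    have hprod : (σ/2) ^ (-(θ/(p-σ/2))) * (σ/2) ^ (θ/(p-σ/2)) = 1 := by
      rw [← Real.rpow_add (by linarith : (0:ℝ) < σ/2)]; simp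
    have h1le : (1:ℝ) ≤ 2^θ * K1 * σ^(-(θ/(p-σ))) * (σ/2)^(θ/(p-σ/2)) := by
      calc (1:ℝ) = (σ/2)^(-(θ/(p-σ/2))) * (σ/2)^(θ/(p-σ/2)) := hprod.symm
        _ ≤ _ := mul_le_mul_of_nonneg_right haux2 (Real.rpow_nonneg (by linarith) _)
    have hscalar : ε^(θ/(p-ε)) * M^E
        ≤ K1*K1*2^θ*M^E * σ^(-(θ/(p-σ))) * (σ/2)^(θ/(p-σ/2)) := by
      calc ε^(θ/(p-ε)) * M^E ≤ K1 * M^E :=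
            mul_le_mul_of_nonneg_right hεK (by positivity)
        _ = (K1 * M^E) * 1 := (mul_one _).symm
        _ ≤ (K1 * M^E) * (2^θ * K1 * σ^(-(θ/(p-σ))) * (σ/2)^(θ/(p-σ/2))) :=
            mul_le_mul_of_nonneg_left h1le (by positivity)
        _ = K1*K1*2^θ*M^E * σ^(-(θ/(p-σ))) * (σ/2)^(θ/(p-σ/2)) := by ring
    calc ENNReal.ofReal (ε ^ (θ/(p-ε)))
          * morreyNormE Ω (p-ε) (lam - α*ε) (fun y => (‖f y‖₊ : ℝ≥0∞))
        ≤ ENNReal.ofReal (ε ^ (θ/(p-ε))) * (ENNReal.ofReal (M^E)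
            * morreyNormE Ω (p - σ/2) (lam - α*(σ/2)) (fun y => (‖f y‖₊ : ℝ≥0∞))) :=
          mul_le_mul_right hmor _
      _ = ENNReal.ofReal (ε ^ (θ/(p-ε)) * M^E)
            * morreyNormE Ω (p - σ/2) (lam - α*(σ/2)) (fun y => (‖f y‖₊ : ℝ≥0∞)) := by
          rw [← mul_assoc, ← ENNReal.ofReal_mul (Real.rpow_nonneg hε0.le _)]
      _ ≤ ENNReal.ofReal (K1*K1*2^θ*M^E * σ^(-(θ/(p-σ))) * (σ/2)^(θ/(p-σ/2)))
            * morreyNormE Ω (p - σ/2) (lam - α*(σ/2)) (fun y => (‖f y‖₊ : ℝ≥0∞)) :=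
          mul_le_mul_left (ENNReal.ofReal_le_ofReal hscalar) _
      _ = ENNReal.ofReal (K1*K1*2^θ*M^E * σ^(-(θ/(p-σ))))
            * (ENNReal.ofReal ((σ/2)^(θ/(p-σ/2)))
              * morreyNormE Ω (p - σ/2) (lam - α*(σ/2)) (fun y => (‖f y‖₊ : ℝ≥0∞))) := by
          rw [ENNReal.ofReal_mul (by positivity), mul_assoc]
      _ ≤ ENNReal.ofReal (K1*K1*2^θ*M^E * σ^(-(θ/(p-σ))))
            * ⨆ ε' ∈ Set.Ioo (0:ℝ) σ, ENNReal.ofReal (ε' ^ (θ/(p-ε')))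
              * morreyNormE Ω (p-ε') (lam - α*ε') (fun y => (‖f y‖₊ : ℝ≥0∞)) := by
          refine mul_le_mul_right ?_ _
          exact le_iSup₂_of_le (σ/2) ⟨by linarith, by linarith⟩ le_rfl
end
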